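/- Let G be a group with symmetric generating sets S ⊆ T, and let S_0 ⊆ G. Suppose that every φ ∈ ξ_T with φ|_{S_0} = id satisfies φ|_{S ∪ S·S_0} = id. Then every φ ∈ ξ_T with φ|_{S_0} = id is the identity on all of G. -/
import Mathlib


open Pointwise

/-- Propagation lemma: if triviality of `φ ∈ ξ_T` on `S₀` propagates to `S ∪ S·S₀`,
then it propagates to the whole group. -/
theorem xi_propagation {G : Type*} [Group G] (S T S₀ : Set G)
    (hSsymm : ∀ s ∈ S, s⁻¹ ∈ S) (hTsymm : ∀ t ∈ T, t⁻¹ ∈ T)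
    (hSgen : Subgroup.closure S = ⊤) (hTgen : Subgroup.closure T = ⊤)
    (hST : S ⊆ T)
    (hprop : ∀ φ : Equiv.Perm G, φ 1 = 1 →
      (∀ g : G, ∀ t ∈ T, φ (g * t) = φ g * t ∨ φ (g * t) = φ g * t⁻¹) →
      (∀ s ∈ S₀, φ s = s) → ∀ u ∈ S ∪ S * S₀, φ u = u) :
    ∀ φ : Equiv.Perm G, φ 1 = 1 →
      (∀ g : G, ∀ t ∈ T, φ (g * t) = φ g * t ∨ φ (g * t) = φ g * t⁻¹) →
      (∀ s ∈ S₀, φ s = s) → ∀ g : G, φ g = g := by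
  -- key step: if `φ` is good and `x ∈ S`, then `ψ z = x⁻¹ * φ (x * z)` is good
  have key : ∀ x ∈ S, ∀ (y : G),
      (∀ φ : Equiv.Perm G, φ 1 = 1 →
        (∀ g : G, ∀ t ∈ T, φ (g * t) = φ g * t ∨ φ (g * t) = φ g * t⁻¹) →
        (∀ s ∈ S₀, φ s = s) → φ y = y) →
      (∀ φ : Equiv.Perm G, φ 1 = 1 →
        (∀ g : G, ∀ t ∈ T, φ (g * t) = φ g * t ∨ φ (g * t) = φ g * t⁻¹) →
        (∀ s ∈ S₀, φ s = s) → φ (x * y) = x * y) := by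
    intro x hx y ih φ h1 hmov h0
    set ψ : Equiv.Perm G :=
      ((Equiv.mulLeft x).trans φ).trans (Equiv.mulLeft x⁻¹) with hψ
    have hψapp : ∀ z : G, ψ z = x⁻¹ * φ (x * z) := fun z => rfl
    have hφx : φ x = x := hprop φ h1 hmov h0 x (Or.inl hx)
    have hψ1 : ψ 1 = 1 := by
      rw [hψapp, mul_one, hφx, inv_mul_cancel]
    have hψmov : ∀ g : G, ∀ t ∈ T, ψ (g * t) = ψ g * t ∨ ψ (g * t) = ψ g * t⁻¹ := by
      intro g t ht
      rw [hψapp, hψapp, ← mul_assoc]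
      rcases hmov (x * g) t ht with h | h
      · left; rw [h, mul_assoc]
      · right; rw [h, mul_assoc]
    have hψ0 : ∀ s ∈ S₀, ψ s = s := by
      intro s hs
      have : φ (x * s) = x * s :=
        hprop φ h1 hmov h0 (x * s) (Or.inr (Set.mul_mem_mul hx hs))
      rw [hψapp, this, inv_mul_cancel_left]
    have := ih ψ hψ1 hψmov hψ0
    rw [hψapp] at this
    exact inv_mul_eq_iff_eq_mul.mp this
  intro φ h1 hmov h0 g
  have hg : g ∈ Subgroup.closure S := hSgen ▸ Subgroup.mem_top g
  revert φ
  induction hg using Subgroup.closure_induction_left with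
  | one => intro φ h1 _ _; exact h1
  | mul_left x hx y hy ih => exact key x hx y ih
  | inv_mul_cancel x hx y hy ih => exact key x⁻¹ (hSsymm x hx) y ih
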